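/- Fix an integer k ≥ 2, reals α > −1/2, γ > −1 and m ≥ 1. Let Ŝ_n^{(α+1,γ)} be the monic generalized ultraspherical polynomials with parameters (α+1, γ), put W(z) := z·Ŝ_{2m}^{(α+1,γ)}(z) − (2m/(2α+γ+4m))·Ŝ_{2m−1}^{(α+1,γ)}(z), and define D(z) := W(T_k(z)) and N(z) := U_{k−1}(z)·Ŝ_{2m}^{(α+1,γ)}(T_k(z)), where T_k and U_{k−1} are the Chebyshev polynomials of the first and second kind. Then every real root z₀ of D satisfies: k·(2m+1+γ)·N(z₀) = (γ+1)·D'(z₀) if T_k(z₀) = 0, and k·(2m+1+γ)·N(z₀) = D'(z₀) if T_k(z₀) ≠ 0. In other words, the reversed measure ξ_{α,γ,k(2m+1)−1}^{R}, whose Stieltjes transform is N/D, has masses (γ+1)/(k(2m+1+γ)) at the zeros of T_k and equal masses 1/(k(2m+1+γ)) at its remaining 2mk support points. -/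

import Mathlib

open Polynomial

/-- The recurrence coefficients `γ_n^{(α,γ)}` of the monic generalized ultraspherical
polynomials: `γ_{2m}^{(α,γ)} = (2m-1+γ)(2m-2+2α+γ)/((4m-4+2α+γ)(4m-2+2α+γ))` and
`γ_{2m+1}^{(α,γ)} = 2m(2m+2α-1)/((4m-2+2α+γ)(4m+2α+γ))`. -/
noncomputable def gammaCoef (α γ : ℝ) (n : ℕ) : ℝ :=
  if Even n then
    ((n : ℝ) - 1 + γ) * ((n : ℝ) - 2 + 2 * α + γ) /
      ((2 * (n : ℝ) - 4 + 2 * α + γ) * (2 * (n : ℝ) - 2 + 2 * α + γ))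
  else
    ((n : ℝ) - 1) * ((n : ℝ) - 2 + 2 * α) /
      ((2 * (n : ℝ) - 4 + 2 * α + γ) * (2 * (n : ℝ) - 2 + 2 * α + γ))

/-- The monic generalized ultraspherical polynomials `Ŝ_n^{(α,γ)}`, orthogonal with respect
to `|x|^γ (1-x²)^{α-1/2}` on `[-1,1]`: `Ŝ 0 = 1`, `Ŝ 1 = X` and
`Ŝ_{n+1}(x) = x · Ŝ_n(x) - γ_{n+1}^{(α,γ)} · Ŝ_{n-1}(x)`. -/
noncomputable def genUltra (α γ : ℝ) : ℕ → Polynomial ℝ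
  | 0 => 1
  | 1 => Polynomial.X
  | n + 2 =>
      Polynomial.X * genUltra α γ (n + 1) -
        Polynomial.C (gammaCoef α γ (n + 2)) * genUltra α γ n

lemma gamma_even (b γ : ℝ) (j : ℕ) :
    gammaCoef b γ (2*j+2) =
      (2*(j:ℝ)+1+γ)*(2*(j:ℝ)+2*b+γ)/((2*b+γ+4*(j:ℝ))*(2*b+γ+4*(j:ℝ)+2)) := by
  have he : Even (2*j+2) := ⟨j+1, by ring⟩
  rw [gammaCoef, if_pos he]; push_cast; ring_nf

lemma gamma_odd (b γ : ℝ) (j : ℕ) :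
    gammaCoef b γ (2*j+3) =
      (2*(j:ℝ)+2)*(2*(j:ℝ)+1+2*b)/((2*b+γ+4*(j:ℝ)+2)*(2*b+γ+4*(j:ℝ)+4)) := by
  have he : ¬ Even (2*j+3) := by simp [parity_simps]
  rw [gammaCoef, if_neg he]; push_cast; ring_nf

section LS
variable (b γ : ℝ) (hP : 0 < 2*b+γ) (j : ℕ)

omit hP j in
lemma denpos (J t : ℝ) (hJ : 0 ≤ J) (ht : 0 ≤ t) (hP : 0 < 2*b+γ) : (0:ℝ) < 2*b+γ+4*J+t := by
  linarith

include hP in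
lemma LS1 :
    2*((j:ℝ)+1) * ((2*(j:ℝ)+3+γ)/(2*b+γ+4*(j:ℝ)+4) - gammaCoef b γ (2*j+4)
        - (2*((j:ℝ)+1)+2)/(2*b+γ+4*((j:ℝ)+1)+2))
      + (2*((j:ℝ)+1)+2) * gammaCoef b γ (2*j+4)
      - (2*((j:ℝ)+1)+2)/(2*b+γ+4*((j:ℝ)+1)+2) * (1+γ) = 0 := by
  rw [show 2*j+4 = 2*(j+1)+2 from by ring, gamma_even]
  have h4 := denpos b γ (j:ℝ) 4 (Nat.cast_nonneg j) (by norm_num) hP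
  have h6 := denpos b γ (j:ℝ) 6 (Nat.cast_nonneg j) (by norm_num) hP
  push_cast
  field_simp
  ring

include hP in
lemma LS2 :
    (2*((j:ℝ)+1)+2)/(2*b+γ+4*((j:ℝ)+1)+2) * gammaCoef b γ (2*j+3)
      + (2*(j:ℝ)+2)/(2*b+γ+4*(j:ℝ)+2) * ((2*(j:ℝ)+3+γ)/(2*b+γ+4*(j:ℝ)+4)
        - gammaCoef b γ (2*j+4) - (2*((j:ℝ)+1)+2)/(2*b+γ+4*((j:ℝ)+1)+2)) = 0 := by
  rw [show 2*j+4 = 2*(j+1)+2 from by ring, gamma_even, gamma_odd]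
  have h2 := denpos b γ (j:ℝ) 2 (Nat.cast_nonneg j) (by norm_num) hP
  have h4 := denpos b γ (j:ℝ) 4 (Nat.cast_nonneg j) (by norm_num) hP
  have h6 := denpos b γ (j:ℝ) 6 (Nat.cast_nonneg j) (by norm_num) hP
  push_cast
  field_simp
  ring

include hP in
lemma LS3 :
    2 * gammaCoef b γ (2*j+5)
      + (2*((j:ℝ)+1)+2)/(2*b+γ+4*((j:ℝ)+1)+2) * (2*((j:ℝ)+1)+1+γ)
      - (2*((j:ℝ)+1)+2) * ((2*((j:ℝ)+1)+3+γ)/(2*b+γ+4*((j:ℝ)+1)+4)) = 0 := by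
  rw [show 2*j+5 = 2*(j+1)+3 from by ring, gamma_odd]
  have h6 := denpos b γ (j:ℝ) 6 (Nat.cast_nonneg j) (by norm_num) hP
  have h8 := denpos b γ (j:ℝ) 8 (Nat.cast_nonneg j) (by norm_num) hP
  push_cast
  field_simp
  ring

include hP in
lemma LS4 :
    ((2*((j:ℝ)+1)+3+γ)/(2*b+γ+4*((j:ℝ)+1)+4)) * gammaCoef b γ (2*j+4)
      + (2*(j:ℝ)+3+γ)/(2*b+γ+4*(j:ℝ)+4) * ((2*((j:ℝ)+1)+2)/(2*b+γ+4*((j:ℝ)+1)+2)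
        - gammaCoef b γ (2*j+5) - (2*((j:ℝ)+1)+3+γ)/(2*b+γ+4*((j:ℝ)+1)+4)) = 0 := by
  rw [show 2*j+4 = 2*(j+1)+2 from by ring, show 2*j+5 = 2*(j+1)+3 from by ring,
    gamma_even, gamma_odd]
  have h4 := denpos b γ (j:ℝ) 4 (Nat.cast_nonneg j) (by norm_num) hP
  have h6 := denpos b γ (j:ℝ) 6 (Nat.cast_nonneg j) (by norm_num) hP
  have h8 := denpos b γ (j:ℝ) 8 (Nat.cast_nonneg j) (by norm_num) hP
  push_cast
  field_simp
  ring
end LS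

lemma AB (b γ : ℝ) (hP : 0 < 2*b+γ) (j : ℕ) :
    (X^2 * derivative (genUltra b γ (2*j+2)) =
      C (2*(j:ℝ)+2) * (X * genUltra b γ (2*j+2)) +
      C ((2*(j:ℝ)+2)/(2*b+γ+4*(j:ℝ)+2)) *
        (X * derivative (genUltra b γ (2*j+1)) + C γ * genUltra b γ (2*j+1))) ∧
    (X^2 * derivative (genUltra b γ (2*j+3)) =
      C (2*(j:ℝ)+3) * (X * genUltra b γ (2*j+3)) +
      C ((2*(j:ℝ)+3+γ)/(2*b+γ+4*(j:ℝ)+4)) * (X * derivative (genUltra b γ (2*j+2)))) := by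
  induction j with
  | zero =>
    have u2 : genUltra b γ 2 = X * X - C (gammaCoef b γ 2) * 1 := rfl
    have u3 : genUltra b γ 3 = X * (genUltra b γ 2) - C (gammaCoef b γ 3) * X := rfl
    have h1 : gammaCoef b γ 2 * 2 = 2/(2*b+γ+2) * (1+γ) := by
      have := gamma_even b γ 0
      norm_num at this
      rw [this]
      have h2 := denpos b γ 0 2 le_rfl (by norm_num) hP
      norm_num at h2
      field_simp
    have h2 : 2*(gammaCoef b γ 2 + gammaCoef b γ 3) = 2*((3+γ)/(2*b+γ+4)) := by
      have e1 := gamma_even b γ 0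
      have e2 := gamma_odd b γ 0
      norm_num at e1 e2
      rw [e1, e2]
      have d2 := denpos b γ 0 2 le_rfl (by norm_num) hP
      have d4 := denpos b γ 0 4 le_rfl (by norm_num) hP
      norm_num at d2 d4
      field_simp
      ring
    constructor
    · show X^2 * derivative (genUltra b γ (2*0+2)) = _
      norm_num
      rw [u2, show genUltra b γ 1 = X from rfl]
      have hC1 := congrArg C h1
      simp only [map_mul, map_add, map_ofNat, map_one] at hC1
      simp only [derivative_sub, derivative_mul, derivative_X, derivative_C, derivative_one]
      simp only [map_mul, map_add, map_ofNat, map_one, map_natCast]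
      linear_combination (X : ℝ[X]) * hC1
    · show X^2 * derivative (genUltra b γ (2*0+3)) = _
      norm_num
      rw [u3, u2]
      have hC2 := congrArg C h2
      simp only [map_mul, map_add, map_ofNat, map_one] at hC2
      simp only [derivative_sub, derivative_mul, derivative_X, derivative_C, derivative_one]
      simp only [map_mul, map_add, map_ofNat, map_one, map_natCast]
      linear_combination (X^2 : ℝ[X]) * hC2
  | succ j ih =>
    obtain ⟨hA, hB⟩ := ih
    have u1 : genUltra b γ (2*j+4) = X * genUltra b γ (2*j+3) -
        C (gammaCoef b γ (2*j+4)) * genUltra b γ (2*j+2) := rfl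
    have u2 : genUltra b γ (2*j+3) = X * genUltra b γ (2*j+2) -
        C (gammaCoef b γ (2*j+3)) * genUltra b γ (2*j+1) := rfl
    have u3 : genUltra b γ (2*j+5) = X * genUltra b γ (2*j+4) -
        C (gammaCoef b γ (2*j+5)) * genUltra b γ (2*j+3) := rfl
    have c1 := congrArg C (LS1 b γ hP j)
    have c2 := congrArg C (LS2 b γ hP j)
    have c3 := congrArg C (LS3 b γ hP j)
    have c4 := congrArg C (LS4 b γ hP j)
    simp only [map_mul, map_add, map_sub, map_ofNat, map_one, map_zero, map_natCast] at c1 c2 c3 c4 hA hB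
    have key : X^2 * derivative (genUltra b γ (2*j+4)) =
        C (2*((j:ℝ)+1)+2) * (X * genUltra b γ (2*j+4)) +
        C ((2*((j:ℝ)+1)+2)/(2*b+γ+4*((j:ℝ)+1)+2)) *
          (X * derivative (genUltra b γ (2*j+3)) + C γ * genUltra b γ (2*j+3)) := by
      have hBu := hB
      rw [u2] at hBu
      simp only [derivative_sub, derivative_mul, derivative_X, derivative_C] at hBu
      rw [u1, u2]
      simp only [derivative_sub, derivative_mul, derivative_X, derivative_C]
      simp only [map_mul, map_add, map_sub, map_ofNat, map_one, map_zero, map_natCast] at hBu ⊢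
      linear_combination (X : ℝ[X]) * hBu +
        (C ((2*(j:ℝ)+3+γ)/(2*b+γ+4*(j:ℝ)+4)) - C (gammaCoef b γ (2*j+4)) -
          C ((2*((j:ℝ)+1)+2)/(2*b+γ+4*((j:ℝ)+1)+2))) * hA +
        (X * genUltra b γ (2*j+2)) * c1 +
        (X * derivative (genUltra b γ (2*j+1)) + C γ * genUltra b γ (2*j+1)) * c2
    have key2 : X^2 * derivative (genUltra b γ (2*j+5)) =
        C (2*((j:ℝ)+1)+3) * (X * genUltra b γ (2*j+5)) +
        C ((2*((j:ℝ)+1)+3+γ)/(2*b+γ+4*((j:ℝ)+1)+4)) *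
          (X * derivative (genUltra b γ (2*j+4))) := by
      have keyu := key
      rw [u1] at keyu
      simp only [derivative_sub, derivative_mul, derivative_X, derivative_C] at keyu
      rw [u3, u1]
      simp only [derivative_sub, derivative_mul, derivative_X, derivative_C]
      simp only [map_mul, map_add, map_sub, map_ofNat, map_one, map_zero, map_natCast] at keyu ⊢
      linear_combination (X : ℝ[X]) * keyu +
        (C ((2*((j:ℝ)+1)+2)/(2*b+γ+4*((j:ℝ)+1)+2)) - C (gammaCoef b γ (2*j+5)) -
          C ((2*((j:ℝ)+1)+3+γ)/(2*b+γ+4*((j:ℝ)+1)+4))) * hB +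
        (X * genUltra b γ (2*j+3)) * c3 +
        (X * derivative (genUltra b γ (2*j+2))) * c4
    constructor
    · show X^2 * derivative (genUltra b γ (2*(j+1)+2)) = _
      rw [show 2*(j+1)+2 = 2*j+4 from by omega, show 2*(j+1)+1 = 2*j+3 from by omega]
      push_cast
      exact key
    · show X^2 * derivative (genUltra b γ (2*(j+1)+3)) = _
      rw [show 2*(j+1)+3 = 2*j+5 from by omega, show 2*(j+1)+2 = 2*j+4 from by omega]
      push_cast
      exact key2

lemma star (b γ : ℝ) (hP : 0 < 2*b+γ) (j : ℕ) :
    X * derivative (X * genUltra b γ (2*j+2) -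
        C ((2*(j:ℝ)+2)/(2*b+γ+4*(j:ℝ)+2)) * genUltra b γ (2*j+1))
      + C γ * (X * genUltra b γ (2*j+2) -
        C ((2*(j:ℝ)+2)/(2*b+γ+4*(j:ℝ)+2)) * genUltra b γ (2*j+1))
    = C (2*(j:ℝ)+3+γ) * (X * genUltra b γ (2*j+2)) := by
  have hA := (AB b γ hP j).1
  simp only [derivative_sub, derivative_mul, derivative_X, derivative_C]
  simp only [map_mul, map_add, map_ofNat, map_one, map_natCast] at hA ⊢
  linear_combination hA


/-- **Masses of the reversed measure for the generalized sieved ultraspherical polynomials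
of the first kind (forward direction of Theorem 3.1).**  With
`W(z) := z · Ŝ_{2m}^{(α+1,γ)}(z) - (2m/(2α+γ+4m)) · Ŝ_{2m-1}^{(α+1,γ)}(z)`,
`D(z) := W(T_k(z))` and `N(z) := U_{k-1}(z) · Ŝ_{2m}^{(α+1,γ)}(T_k(z))`, every real root
`z₀` of `D` satisfies `k·(2m+1+γ)·N(z₀) = (γ+1)·D'(z₀)` if `T_k(z₀) = 0` and
`k·(2m+1+γ)·N(z₀) = D'(z₀)` if `T_k(z₀) ≠ 0`.  That is, the reversed measure
`ξ_{α,γ,k(2m+1)-1}^R` with Stieltjes transform `N/D` has masses `(γ+1)/(k(2m+1+γ))` at the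
zeros of `T_k` and equal masses `1/(k(2m+1+γ))` at its remaining `2mk` support points. -/
theorem sieved_ultra_first_reversed_masses (k : ℕ) (hk : 2 ≤ k)
    (α γ : ℝ) (hα : -(1 / 2 : ℝ) < α) (hγ : -1 < γ) (m : ℕ) (hm : 1 ≤ m)
    (W D N : Polynomial ℝ)
    (hW : W = Polynomial.X * genUltra (α + 1) γ (2 * m) -
      Polynomial.C (2 * (m : ℝ) / (2 * α + γ + 4 * m)) * genUltra (α + 1) γ (2 * m - 1))
    (hD : D = W.comp (Polynomial.Chebyshev.T ℝ (k : ℤ)))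
    (hN : N = Polynomial.Chebyshev.U ℝ ((k : ℤ) - 1) *
      (genUltra (α + 1) γ (2 * m)).comp (Polynomial.Chebyshev.T ℝ (k : ℤ))) :
    ∀ z₀ : ℝ, D.eval z₀ = 0 →
      ((Polynomial.Chebyshev.T ℝ (k : ℤ)).eval z₀ = 0 →
        (k : ℝ) * (2 * (m : ℝ) + 1 + γ) * N.eval z₀ =
          (γ + 1) * (Polynomial.derivative D).eval z₀) ∧
      ((Polynomial.Chebyshev.T ℝ (k : ℤ)).eval z₀ ≠ 0 →
        (k : ℝ) * (2 * (m : ℝ) + 1 + γ) * N.eval z₀ =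
          (Polynomial.derivative D).eval z₀) := by
  obtain ⟨j, rfl⟩ : ∃ j, m = j + 1 := ⟨m - 1, by omega⟩
  intro z₀ hz
  have hP : 0 < 2*(α+1)+γ := by linarith
  have hWr : W = X * genUltra (α+1) γ (2*j+2) -
      C ((2*(j:ℝ)+2)/(2*(α+1)+γ+4*(j:ℝ)+2)) * genUltra (α+1) γ (2*j+1) := by
    have hj : (0:ℝ) ≤ (j:ℝ) := Nat.cast_nonneg j
    rw [hW, show 2*(j+1)-1 = 2*j+1 from by omega, show 2*(j+1) = 2*j+2 from by omega]
    congr 2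
    rw [C_inj]
    push_cast
    rw [div_eq_div_iff (by linarith) (by linarith)]
    ring
  have hstar := star (α+1) γ hP j
  rw [← hWr] at hstar
  set Tp := Polynomial.Chebyshev.T ℝ (k : ℤ) with hTp
  set S := genUltra (α+1) γ (2*j+2) with hS
  have hWt : W.eval (Tp.eval z₀) = 0 := by rw [hD, eval_comp] at hz; exact hz
  have hDer : (derivative D).eval z₀ =
      ((k:ℝ) * (Polynomial.Chebyshev.U ℝ ((k:ℤ)-1)).eval z₀) *
        (derivative W).eval (Tp.eval z₀) := by
    rw [hD, derivative_comp, Polynomial.Chebyshev.T_derivative_eq_U]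
    simp only [eval_mul, eval_comp, eval_intCast]
    push_cast
    ring
  have hNe : N.eval z₀ = (Polynomial.Chebyshev.U ℝ ((k:ℤ)-1)).eval z₀ *
      S.eval (Tp.eval z₀) := by
    rw [hN, show 2*(j+1) = 2*j+2 from by omega]
    simp only [eval_mul, eval_comp]
    rfl
  constructor
  · intro ht0
    have hds := congrArg derivative hstar
    simp only [derivative_add, derivative_mul, derivative_X, derivative_C, one_mul,
      zero_mul, add_zero, zero_add] at hds
    have h0 := congrArg (eval (Tp.eval z₀)) hds
    simp only [eval_add, eval_mul, eval_X, eval_C, ht0, zero_mul, mul_zero, add_zero,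
      zero_add] at h0
    rw [ht0] at hNe hDer
    rw [hNe, hDer]
    push_cast
    linear_combination (-(k:ℝ) * (Polynomial.Chebyshev.U ℝ ((k:ℤ)-1)).eval z₀) * h0
  · intro htne
    have he := congrArg (eval (Tp.eval z₀)) hstar
    simp only [eval_add, eval_mul, eval_X, eval_C, hWt, mul_zero, add_zero] at he
    have hw' : (derivative W).eval (Tp.eval z₀) =
        (2*(j:ℝ)+3+γ) * S.eval (Tp.eval z₀) := by
      have := mul_left_cancel₀ htne (by linarith [he] : Tp.eval z₀ * (derivative W).eval (Tp.eval z₀) =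
        Tp.eval z₀ * ((2*(j:ℝ)+3+γ) * S.eval (Tp.eval z₀)))
      exact this
    rw [hNe, hDer, hw']
    push_cast
    ring
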